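/- Fix ν ≥ 0 and s ∈ [0,1). Then lim_{t↓0} ( h_{e^{−t}}(s) − s ) / t = (1 − s)( 1 + (ν/2)(1 − s) ). In other words, the right derivative at t = 0 of t ↦ h_{e^{−t}}(s) equals a(s) = (1−s)(1 + (ν/2)(1−s)), which is the generator term α(f(s) − s) with branching rate α = 1 + ν and offspring generating function f(s) = (1+ν)^{−1}(1 + ν/2 + (ν/2)s²). -/

import Mathlib

open Filter Finset

/-- The linear fractional generating function `h_a(s)` (with parameter ν). -/
noncomputable def h (ν a s : ℝ) : ℝ :=
  if s = 1 then 1 else 1 - a * (1/(1-s) + ν/2 * (1-a))⁻¹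

theorem stmt18 (ν : ℝ) (hν : 0 ≤ ν) (s : ℝ) (hs : s ∈ Set.Ico (0 : ℝ) 1) :
    Tendsto (fun t : ℝ => (h ν (Real.exp (-t)) s - s) / t) (nhdsWithin 0 (Set.Ioi 0))
      (nhds ((1 - s) * (1 + ν/2 * (1 - s)))) := by
  obtain ⟨hs0, hs1⟩ := hs
  have hsne : s ≠ 1 := ne_of_lt hs1
  have h1s : (1 : ℝ) - s ≠ 0 := sub_ne_zero.mpr (ne_of_gt hs1)
  set g : ℝ → ℝ := fun t => 1 - Real.exp (-t) * (1/(1-s) + ν/2 * (1 - Real.exp (-t)))⁻¹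
  have hg : ∀ t, h ν (Real.exp (-t)) s = g t := by
    intro t; simp [h, hsne, g]
  have he : HasDerivAt (fun t : ℝ => Real.exp (-t)) (-1) 0 := by
    simpa using (hasDerivAt_neg (0:ℝ)).exp
  have hinner : HasDerivAt (fun t => 1/(1-s) + ν/2 * (1 - Real.exp (-t))) (ν/2) 0 := by
    have := ((hasDerivAt_const (0:ℝ) (1:ℝ)).sub he).const_mul (ν/2)
    exact ((hasDerivAt_const (0:ℝ) (1/(1-s))).add this).congr_deriv (by ring)
  have hinner0 : (1/(1-s) + ν/2 * (1 - Real.exp (-(0:ℝ)))) = 1/(1-s) := by simp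
  have hne : (1/(1-s) + ν/2 * (1 - Real.exp (-(0:ℝ)))) ≠ 0 := by
    rw [hinner0]; exact one_div_ne_zero h1s
  have hinv := hinner.inv hne
  have hmul := he.mul hinv
  have hgd : HasDerivAt g ((1 - s) * (1 + ν/2 * (1 - s))) 0 := by
    have := (hasDerivAt_const (0:ℝ) (1:ℝ)).sub hmul
    refine this.congr_deriv ?_
    simp only [Pi.inv_apply]
    beta_reduce
    rw [hinner0, neg_zero, Real.exp_zero]
    field_simp
    ring
  have hg0 : g 0 = s := by simp [g, hinner0]
  have := hasDerivAt_iff_tendsto_slope.mp hgd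
  have h2 : Tendsto (fun t : ℝ => (g t - s) / t) (nhdsWithin 0 (Set.Ioi 0))
      (nhds ((1 - s) * (1 + ν/2 * (1 - s)))) := by
    refine (this.mono_left (nhdsWithin_mono _ ?_)).congr (fun t => ?_)
    · intro x hx; exact ne_of_gt hx
    · simp [slope, hg0, div_eq_inv_mul]
  exact h2.congr (fun t => by rw [hg])
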